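/- Let ν_λ be a Poisson process of intensity λ > 0 on ℝ, let z_t be a deterministic path with z_t/t → a as t → ∞, and suppose E[(L_λ(z_t,t) − ν_λ(z_t − λ⁻²t) − 2λ⁻¹t)²]/t → 0 as t → ∞. Then Var(L_λ(z_t,t))/t → |aλ − 1/λ| as t → ∞. -/

import Mathlib

open MeasureTheory ProbabilityTheory Filter

open scoped ENNReal NNReal Nat

section PoissonMoments

private lemma hasSum_exp_aux (r : ℝ) :
    HasSum (fun n : ℕ => r ^ n / n !) (Real.exp r) := by
  rw [Real.exp_eq_exp_ℝ]
  exact NormedSpace.expSeries_div_hasSum_exp r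

private lemma hasSum_m1_aux (r : ℝ) :
    HasSum (fun n : ℕ => (n : ℝ) * r ^ n / n !) (r * Real.exp r) := by
  have h : HasSum (fun n : ℕ => ((n + 1 : ℕ) : ℝ) * r ^ (n + 1) / (n + 1)!)
      (r * Real.exp r) := by
    have h0 : HasSum (fun i : ℕ => r * (r ^ i / i !)) (r * Real.exp r) :=
      (hasSum_exp_aux r).mul_left r
    convert h0 using 2 with n
    have hf : ((n ! : ℕ) : ℝ) ≠ 0 := by exact_mod_cast n.factorial_ne_zero
    rw [Nat.factorial_succ]
    push_cast
    field_simp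
    ring
  have h2 := (hasSum_nat_add_iff
    (f := fun n : ℕ => (n : ℝ) * r ^ n / n !) 1).mp h
  simpa using h2

private lemma hasSum_m2_aux (r : ℝ) :
    HasSum (fun n : ℕ => (n : ℝ) * ((n : ℝ) - 1) * r ^ n / n !)
      (r ^ 2 * Real.exp r) := by
  have h : HasSum (fun n : ℕ =>
      ((n + 2 : ℕ) : ℝ) * (((n + 2 : ℕ) : ℝ) - 1) * r ^ (n + 2) / (n + 2)!)
      (r ^ 2 * Real.exp r) := by
    have h0 : HasSum (fun i : ℕ => r ^ 2 * (r ^ i / i !)) (r ^ 2 * Real.exp r) :=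
      (hasSum_exp_aux r).mul_left (r ^ 2)
    convert h0 using 2 with n
    have hf : ((n ! : ℕ) : ℝ) ≠ 0 := by exact_mod_cast n.factorial_ne_zero
    rw [Nat.factorial_succ, Nat.factorial_succ]
    push_cast
    field_simp
    ring
  have h2 := (hasSum_nat_add_iff
    (f := fun n : ℕ => (n : ℝ) * ((n : ℝ) - 1) * r ^ n / n !) 2).mp h
  norm_num [Finset.sum_range_succ] at h2
  exact h2

private lemma pois_hasSum_m1 (r : ℝ≥0) :
    HasSum (fun n : ℕ => poissonPMFReal r n * (n : ℝ)) (r : ℝ) := by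
  have h : HasSum (fun i : ℕ => Real.exp (-(r : ℝ)) * ((i : ℝ) * (r : ℝ) ^ i / i !))
      (Real.exp (-(r : ℝ)) * ((r : ℝ) * Real.exp r)) :=
    (hasSum_m1_aux (r : ℝ)).mul_left (Real.exp (-(r : ℝ)))
  convert h using 2 with n
  · unfold poissonPMFReal
    ring
  · rw [Real.exp_neg]
    field_simp

private lemma pois_hasSum_m2 (r : ℝ≥0) :
    HasSum (fun n : ℕ => poissonPMFReal r n * (n : ℝ) ^ 2)
      ((r : ℝ) + (r : ℝ) ^ 2) := by
  have h := ((hasSum_m2_aux (r : ℝ)).add (hasSum_m1_aux (r : ℝ))).mul_left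
    (Real.exp (-(r : ℝ)))
  have hfun : (fun n : ℕ => Real.exp (-(r : ℝ)) *
      ((n : ℝ) * ((n : ℝ) - 1) * (r : ℝ) ^ n / n ! + (n : ℝ) * (r : ℝ) ^ n / n !))
      = fun n : ℕ => poissonPMFReal r n * (n : ℝ) ^ 2 := by
    funext n
    unfold poissonPMFReal
    ring
  rw [hfun] at h
  have hval : Real.exp (-(r : ℝ)) * ((r : ℝ) ^ 2 * Real.exp r + (r : ℝ) * Real.exp r)
      = (r : ℝ) + (r : ℝ) ^ 2 := by
    rw [Real.exp_neg]
    field_simp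
    ring
  rwa [hval] at h

private lemma pois_measure_singleton (r : ℝ≥0) (n : ℕ) :
    poissonMeasure r {n} = ENNReal.ofReal (poissonPMFReal r n) :=
  by rw [poissonMeasure_singleton]; rfl

private lemma pois_integrable (r : ℝ≥0) {f : ℕ → ℝ}
    (h : Summable fun n => poissonPMFReal r n * |f n|) :
    Integrable f (poissonMeasure r) := by
  refine ⟨(Measurable.of_discrete).aestronglyMeasurable, ?_⟩
  have hcalc : ∫⁻ n, (‖f n‖₊ : ℝ≥0∞) ∂(poissonMeasure r)
      = ENNReal.ofReal (∑' n, poissonPMFReal r n * |f n|) := by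
    rw [lintegral_countable' (fun n : ℕ => (‖f n‖₊ : ℝ≥0∞))]
    rw [ENNReal.ofReal_tsum_of_nonneg
      (fun n => mul_nonneg poissonPMFReal_nonneg (abs_nonneg _)) h]
    congr 1
    funext n
    rw [pois_measure_singleton, ← enorm_eq_nnnorm, Real.enorm_eq_ofReal_abs,
      ← ENNReal.ofReal_mul (abs_nonneg _), mul_comm]
  show ∫⁻ n, (‖f n‖₊ : ℝ≥0∞) ∂(poissonMeasure r) < ∞
  rw [hcalc]
  exact ENNReal.ofReal_lt_top

private lemma pois_integral (r : ℝ≥0) {f : ℕ → ℝ} {S : ℝ}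
    (h : HasSum (fun n => poissonPMFReal r n * f n) S)
    (habs : Summable fun n => poissonPMFReal r n * |f n|) :
    ∫ n, f n ∂(poissonMeasure r) = S := by
  rw [integral_poissonMeasure' (pois_integrable r habs)]
  calc ∑' n, (Real.exp (-(r : ℝ)) * (r : ℝ) ^ n / (n)!) • f n
      = ∑' n, poissonPMFReal r n * f n := by
        congr 1
    _ = S := h.tsum_eq

/-- If `X` has a Poisson distribution with rate `r`, then `X` is in `L²` and its
variance is `r`. -/
private lemma poisson_memℒp_variance {Ω : Type*} [MeasurableSpace Ω]
    (P : Measure Ω) [IsProbabilityMeasure P]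
    {X : Ω → ℝ} (hX : Measurable X) (r : ℝ≥0)
    (h : Measure.map X P = Measure.map (fun n : ℕ => (n : ℝ)) (poissonMeasure r)) :
    MemLp X 2 P ∧ variance X P = r := by
  have hmc : Measurable (fun n : ℕ => (n : ℝ)) := Measurable.of_discrete
  have habs1 : Summable fun n : ℕ => poissonPMFReal r n * |(n : ℝ)| := by
    simpa [Nat.abs_cast] using (pois_hasSum_m1 r).summable
  have habs2 : Summable fun n : ℕ => poissonPMFReal r n * |(n : ℝ) ^ 2| := by
    have hfun : (fun n : ℕ => poissonPMFReal r n * |(n : ℝ) ^ 2|)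
        = fun n : ℕ => poissonPMFReal r n * (n : ℝ) ^ 2 := by
      funext n
      rw [abs_of_nonneg (sq_nonneg ((n : ℝ)))]
    rw [hfun]
    exact (pois_hasSum_m2 r).summable
  have hint2 : Integrable (fun n : ℕ => ((n : ℝ)) ^ 2) (poissonMeasure r) :=
    pois_integrable r habs2
  have hmemcoe : MemLp (fun n : ℕ => (n : ℝ)) 2 (poissonMeasure r) :=
    (memLp_two_iff_integrable_sq hmc.aestronglyMeasurable).mpr hint2
  have hmem : MemLp X 2 P := by
    have h1 : MemLp (id : ℝ → ℝ) 2 (Measure.map X P) := by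
      rw [h]
      exact (memLp_map_measure_iff aestronglyMeasurable_id hmc.aemeasurable).mpr
        (by simpa [Function.comp] using hmemcoe)
    have h2 := (memLp_map_measure_iff aestronglyMeasurable_id hX.aemeasurable).mp h1
    simpa [Function.comp] using h2
  have hEX : ∫ ω, X ω ∂P = (r : ℝ) := by
    have h1 : ∫ y, y ∂(Measure.map X P) = ∫ ω, X ω ∂P :=
      integral_map hX.aemeasurable aestronglyMeasurable_id
    have h2 : ∫ y, y ∂(Measure.map (fun n : ℕ => (n : ℝ)) (poissonMeasure r))
        = ∫ n, ((n : ℕ) : ℝ) ∂(poissonMeasure r) :=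
      integral_map hmc.aemeasurable aestronglyMeasurable_id
    rw [← h1, h, h2]
    exact pois_integral r (pois_hasSum_m1 r) habs1
  have hEX2 : ∫ ω, (X ω) ^ 2 ∂P = (r : ℝ) + (r : ℝ) ^ 2 := by
    have hgm : Measurable fun y : ℝ => y ^ 2 := measurable_id.pow_const 2
    have h1 : ∫ y, y ^ 2 ∂(Measure.map X P) = ∫ ω, (X ω) ^ 2 ∂P :=
      integral_map hX.aemeasurable hgm.aestronglyMeasurable
    have h2 : ∫ y, y ^ 2 ∂(Measure.map (fun n : ℕ => (n : ℝ)) (poissonMeasure r))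
        = ∫ n, ((n : ℕ) : ℝ) ^ 2 ∂(poissonMeasure r) :=
      integral_map hmc.aemeasurable hgm.aestronglyMeasurable
    rw [← h1, h, h2]
    exact pois_integral r (pois_hasSum_m2 r) habs2
  refine ⟨hmem, ?_⟩
  rw [variance_eq_sub hmem]
  have hpow : ∫ ω, (X ^ 2) ω ∂P = ∫ ω, (X ω) ^ 2 ∂P := by
    simp only [Pi.pow_apply]
  rw [hpow, hEX2, hEX]
  ring

end PoissonMoments

section VarianceTools

variable {Ω : Type*} [MeasurableSpace Ω] {P : Measure Ω}

private lemma variance_add_const' [IsProbabilityMeasure P] {X : Ω → ℝ}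
    (hX : Integrable X P) (c : ℝ) :
    variance (fun ω => X ω + c) P = variance X P := by
  have hE : ∫ ω, (X ω + c) ∂P = (∫ ω, X ω ∂P) + c := by
    rw [integral_add hX (integrable_const c), integral_const]
    simp
  have hptwise : ∀ ω, X ω + c - ((∫ x, X x ∂P) + c) = X ω - ∫ x, X x ∂P :=
    fun ω => by ring
  simp only [ProbabilityTheory.variance, ProbabilityTheory.evariance, hE, hptwise]

private lemma eLpNorm_toReal_eq_sqrt {f : Ω → ℝ} (hf : MemLp f 2 P) :
    (eLpNorm f 2 P).toReal = Real.sqrt (∫ ω, (f ω) ^ 2 ∂P) := by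
  rw [hf.eLpNorm_eq_integral_rpow_norm two_ne_zero ENNReal.ofNat_ne_top]
  simp only [ENNReal.toReal_ofNat]
  have hbase : 0 ≤ ∫ a, ‖f a‖ ^ (2 : ℝ) ∂P :=
    integral_nonneg fun a => Real.rpow_nonneg (norm_nonneg _) _
  rw [ENNReal.toReal_ofReal (Real.rpow_nonneg hbase _)]
  rw [show ((2 : ℝ))⁻¹ = (1 / 2 : ℝ) by norm_num, ← Real.sqrt_eq_rpow]
  congr 1
  refine integral_congr_ae (Filter.Eventually.of_forall fun ω => ?_)
  show ‖f ω‖ ^ (2 : ℝ) = f ω ^ 2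
  rw [Real.rpow_two, Real.norm_eq_abs, sq_abs]

private lemma sqrt_variance_eq [IsProbabilityMeasure P] {f : Ω → ℝ}
    (hf : MemLp f 2 P) :
    Real.sqrt (variance f P)
      = (eLpNorm (fun ω => f ω - ∫ x, f x ∂P) 2 P).toReal := by
  have hc : MemLp (fun ω => f ω - ∫ x, f x ∂P) 2 P := hf.sub (memLp_const _)
  rw [eLpNorm_toReal_eq_sqrt hc]
  congr 1
  rw [variance_eq_integral hf.aemeasurable]

private lemma sqrt_variance_le [IsProbabilityMeasure P] {X Y : Ω → ℝ}
    (hX : MemLp X 2 P) (hY : MemLp Y 2 P) :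
    Real.sqrt (variance X P)
      ≤ Real.sqrt (variance Y P) + Real.sqrt (∫ ω, (X ω - Y ω) ^ 2 ∂P) := by
  have hZ : MemLp (fun ω => X ω - Y ω) 2 P := hX.sub hY
  have hcX : MemLp (fun ω => X ω - ∫ x, X x ∂P) 2 P := hX.sub (memLp_const _)
  have hcY : MemLp (fun ω => Y ω - ∫ x, Y x ∂P) 2 P := hY.sub (memLp_const _)
  have hcZ : MemLp (fun ω => (X ω - Y ω) - ∫ x, (X x - Y x) ∂P) 2 P :=
    hZ.sub (memLp_const _)
  have hEZ : ∫ x, (X x - Y x) ∂P = (∫ x, X x ∂P) - ∫ x, Y x ∂P :=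
    integral_sub (hX.integrable one_le_two) (hY.integrable one_le_two)
  have hfun : (fun ω => X ω - ∫ x, X x ∂P)
      = (fun ω => Y ω - ∫ x, Y x ∂P)
        + fun ω => (X ω - Y ω) - ∫ x, (X x - Y x) ∂P := by
    funext ω
    simp only [Pi.add_apply, hEZ]
    ring
  have htri := eLpNorm_add_le hcY.aestronglyMeasurable hcZ.aestronglyMeasurable
    one_le_two
  rw [← hfun] at htri
  have h1 : (eLpNorm (fun ω => X ω - ∫ x, X x ∂P) 2 P).toReal
      ≤ (eLpNorm (fun ω => Y ω - ∫ x, Y x ∂P) 2 P).toReal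
        + (eLpNorm (fun ω => (X ω - Y ω) - ∫ x, (X x - Y x) ∂P) 2 P).toReal := by
    have hfin : eLpNorm (fun ω => Y ω - ∫ x, Y x ∂P) 2 P
        + eLpNorm (fun ω => (X ω - Y ω) - ∫ x, (X x - Y x) ∂P) 2 P ≠ ∞ :=
      (ENNReal.add_lt_top.mpr ⟨hcY.2, hcZ.2⟩).ne
    calc (eLpNorm (fun ω => X ω - ∫ x, X x ∂P) 2 P).toReal
        ≤ (eLpNorm (fun ω => Y ω - ∫ x, Y x ∂P) 2 P
            + eLpNorm (fun ω => (X ω - Y ω) - ∫ x, (X x - Y x) ∂P) 2 P).toReal :=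
          ENNReal.toReal_mono hfin htri
      _ = _ := ENNReal.toReal_add hcY.2.ne hcZ.2.ne
  rw [sqrt_variance_eq hX, sqrt_variance_eq hY]
  refine h1.trans (add_le_add_right ?_ _)
  rw [← sqrt_variance_eq hZ]
  refine Real.sqrt_le_sqrt ?_
  have h2 := variance_le_expectation_sq (X := fun ω => X ω - Y ω)
    hZ.aestronglyMeasurable
  simpa using h2

end VarianceTools

/-- in the classical Hammersley model with rate-`λ` Poisson
equilibrium initial measure, if `z_t/t → a` and
`E[(L_λ(z_t,t) − ν_λ(z_t − λ⁻²t) − 2λ⁻¹t)²]/t → 0`, then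
`Var(L_λ(z_t,t))/t → |aλ − 1/λ|`. -/
theorem hammersley_variance_noncharacteristic
    {Ω : Type*} [MeasurableSpace Ω] (P : Measure Ω) [IsProbabilityMeasure P]
    (lam : ℝ) (hlam : 0 < lam)
    (ν : Ω → ℝ → ℝ)   -- signed counting function of the equilibrium measure
    (L : Ω → ℝ → ℝ → ℝ)  -- L ω x t = L_λ(x,t)
    (hνmeas : ∀ x : ℝ, Measurable fun ω => ν ω x)
    (hLmeas : ∀ x t : ℝ, Measurable fun ω => L ω x t)
    -- ν is the counting function of a Poisson process of intensity λ:
    (hν0 : ∀ ω, ν ω 0 = 0)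
    (hpois : ∀ x y : ℝ, x ≤ y →
      Measure.map (fun ω => ν ω y - ν ω x) P
        = Measure.map (fun n : ℕ => (n : ℝ))
            (poissonMeasure (Real.toNNReal (lam * (y - x)))))
    -- square integrability
    (hLsq : ∀ x t : ℝ, MemLp (fun ω => L ω x t) 2 P)
    -- the deterministic path
    (z : ℝ → ℝ) (a : ℝ) (hz : Tendsto (fun t => z t / t) atTop (nhds a))
    -- the L² approximation along the characteristic
    (hL2 : Tendsto
      (fun t : ℝ =>
        (∫ ω, (L ω (z t) t - (ν ω (z t - t / lam ^ 2) + 2 * t / lam)) ^ 2 ∂P) / t)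
      atTop (nhds 0)) :
    Tendsto (fun t : ℝ => variance (fun ω => L ω (z t) t) P / t)
      atTop (nhds |a * lam - 1 / lam|) := by
  -- properties of the Poisson counting function
  have hνlem : ∀ x : ℝ, MemLp (fun ω => ν ω x) 2 P ∧
      variance (fun ω => ν ω x) P = lam * |x| := by
    intro x
    rcases le_or_gt 0 x with hx | hx
    · have hp := hpois 0 x hx
      have heq : (fun ω => ν ω x - ν ω 0) = fun ω => ν ω x := by
        funext ω; rw [hν0]; ring
      rw [heq] at hp
      obtain ⟨hm, hv⟩ := poisson_memℒp_variance P (hνmeas x) _ hp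
      refine ⟨hm, ?_⟩
      rw [hv, sub_zero, Real.coe_toNNReal _ (mul_nonneg hlam.le hx),
        abs_of_nonneg hx]
    · have hp := hpois x 0 hx.le
      have heq : (fun ω => ν ω 0 - ν ω x) = fun ω => (-1 : ℝ) * ν ω x := by
        funext ω; rw [hν0]; ring
      rw [heq] at hp
      have hmeas' : Measurable fun ω => (-1 : ℝ) * ν ω x := (hνmeas x).const_mul _
      obtain ⟨hm, hv⟩ := poisson_memℒp_variance P hmeas' _ hp
      have hm' : MemLp (fun ω => ν ω x) 2 P := by
        have := hm.const_mul (-1 : ℝ)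
        simpa using this
      refine ⟨hm', ?_⟩
      have hvv : variance (fun ω => (-1 : ℝ) * ν ω x) P
          = variance (fun ω => ν ω x) P := by
        rw [variance_const_mul]; norm_num
      have hr : ((Real.toNNReal (lam * (0 - x)) : ℝ≥0) : ℝ) = lam * (0 - x) :=
        Real.coe_toNNReal _ (mul_nonneg hlam.le (by linarith))
      rw [← hvv, hv, hr, abs_of_neg hx]
      ring
  -- abbreviations
  set X : ℝ → Ω → ℝ := fun t ω => L ω (z t) t with hXdef
  set Y : ℝ → Ω → ℝ := fun t ω => ν ω (z t - t / lam ^ 2) + 2 * t / lam with hYdef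
  have hXm : ∀ t, MemLp (X t) 2 P := fun t => hLsq (z t) t
  have hYm : ∀ t, MemLp (Y t) 2 P := fun t =>
    ((hνlem (z t - t / lam ^ 2)).1).add (memLp_const _)
  have hvarY : ∀ t, variance (Y t) P = lam * |z t - t / lam ^ 2| := by
    intro t
    have h1 := variance_add_const'
      ((hνlem (z t - t / lam ^ 2)).1.integrable one_le_two) (2 * t / lam)
    calc variance (Y t) P = variance (fun ω => ν ω (z t - t / lam ^ 2)) P := h1
      _ = lam * |z t - t / lam ^ 2| := (hνlem _).2
  -- E t : the L² error
  set E : ℝ → ℝ := fun t =>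
    (∫ ω, (L ω (z t) t - (ν ω (z t - t / lam ^ 2) + 2 * t / lam)) ^ 2 ∂P) / t
    with hEdef
  -- pointwise bound
  have hbound : ∀ t : ℝ, 0 < t →
      |Real.sqrt (variance (X t) P / t) - Real.sqrt (variance (Y t) P / t)|
        ≤ Real.sqrt (E t) := by
    intro t ht
    have hXY := sqrt_variance_le (hXm t) (hYm t)
    have hYX := sqrt_variance_le (hYm t) (hXm t)
    have hsymm : (∫ ω, (Y t ω - X t ω) ^ 2 ∂P) = ∫ ω, (X t ω - Y t ω) ^ 2 ∂P :=
      integral_congr_ae (Filter.Eventually.of_forall fun ω => by ring)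
    rw [hsymm] at hYX
    have habs : |Real.sqrt (variance (X t) P) - Real.sqrt (variance (Y t) P)|
        ≤ Real.sqrt (∫ ω, (X t ω - Y t ω) ^ 2 ∂P) :=
      abs_sub_le_iff.mpr ⟨by linarith, by linarith⟩
    have hst : 0 < Real.sqrt t := Real.sqrt_pos.mpr ht
    have hEeq : E t = (∫ ω, (X t ω - Y t ω) ^ 2 ∂P) / t := rfl
    rw [hEeq, Real.sqrt_div (variance_nonneg _ _) t,
      Real.sqrt_div (variance_nonneg _ _) t,
      Real.sqrt_div (integral_nonneg fun ω => sq_nonneg _) t,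
      div_sub_div_same, abs_div, abs_of_pos hst]
    gcongr
  -- limit of the variance of Y
  have hG : Tendsto (fun t => variance (Y t) P / t) atTop
      (nhds |a * lam - 1 / lam|) := by
    have h1 : ∀ᶠ t in atTop,
        lam * |z t / t - 1 / lam ^ 2| = variance (Y t) P / t := by
      filter_upwards [eventually_gt_atTop (0 : ℝ)] with t ht
      rw [hvarY t, mul_div_assoc]
      congr 1
      have heq : z t - t / lam ^ 2 = (z t / t - 1 / lam ^ 2) * t := by
        field_simp
      rw [heq, abs_mul, abs_of_pos ht, mul_div_cancel_right₀ _ ht.ne']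
    have h2 : Tendsto (fun t => lam * |z t / t - 1 / lam ^ 2|) atTop
        (nhds (lam * |a - 1 / lam ^ 2|)) :=
      ((hz.sub tendsto_const_nhds).abs).const_mul lam
    have h3 : lam * |a - 1 / lam ^ 2| = |a * lam - 1 / lam| := by
      have hx : lam * (a - 1 / lam ^ 2) = a * lam - 1 / lam := by
        field_simp
      rw [← hx, abs_mul, abs_of_pos hlam]
    rw [h3] at h2
    exact Tendsto.congr' h1 h2
  -- limit of sqrt E
  have hE0 : Tendsto (fun t => Real.sqrt (E t)) atTop (nhds 0) := by
    have h1 := (Real.continuous_sqrt.tendsto 0).comp hL2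
    simpa [Function.comp_def, Real.sqrt_zero] using h1
  -- limit of sqrt of variance of Y / t
  have hsqrtG : Tendsto (fun t => Real.sqrt (variance (Y t) P / t)) atTop
      (nhds (Real.sqrt |a * lam - 1 / lam|)) := by
    have h1 := (Real.continuous_sqrt.tendsto _).comp hG
    simpa [Function.comp_def] using h1
  -- limit of sqrt of variance of X / t
  have hsqrtF : Tendsto (fun t => Real.sqrt (variance (X t) P / t)) atTop
      (nhds (Real.sqrt |a * lam - 1 / lam|)) := by
    rw [tendsto_iff_dist_tendsto_zero]
    have hGd : Tendsto
        (fun t => dist (Real.sqrt (variance (Y t) P / t))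
          (Real.sqrt |a * lam - 1 / lam|)) atTop (nhds 0) :=
      tendsto_iff_dist_tendsto_zero.mp hsqrtG
    have hsum : Tendsto
        (fun t => Real.sqrt (E t)
          + dist (Real.sqrt (variance (Y t) P / t))
              (Real.sqrt |a * lam - 1 / lam|)) atTop (nhds 0) := by
      have := hE0.add hGd
      simpa using this
    refine squeeze_zero' (Filter.Eventually.of_forall fun t => dist_nonneg)
      ?_ hsum
    filter_upwards [eventually_gt_atTop (0 : ℝ)] with t ht
    calc dist (Real.sqrt (variance (X t) P / t))
          (Real.sqrt |a * lam - 1 / lam|)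
        ≤ dist (Real.sqrt (variance (X t) P / t))
            (Real.sqrt (variance (Y t) P / t))
          + dist (Real.sqrt (variance (Y t) P / t))
              (Real.sqrt |a * lam - 1 / lam|) := dist_triangle _ _ _
      _ ≤ Real.sqrt (E t)
          + dist (Real.sqrt (variance (Y t) P / t))
              (Real.sqrt |a * lam - 1 / lam|) := by
        have h := hbound t ht
        rw [Real.dist_eq]
        gcongr
  -- conclusion
  have hfinal := hsqrtF.pow 2
  have hsq : (Real.sqrt |a * lam - 1 / lam|) ^ 2 = |a * lam - 1 / lam| :=
    Real.sq_sqrt (abs_nonneg _)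
  rw [hsq] at hfinal
  have heq : (fun t => (Real.sqrt (variance (X t) P / t)) ^ 2)
      =ᶠ[atTop] fun t => variance (X t) P / t := by
    filter_upwards [eventually_gt_atTop (0 : ℝ)] with t ht
    exact Real.sq_sqrt (div_nonneg (variance_nonneg _ _) ht.le)
  exact Tendsto.congr' heq hfinal
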